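/- Consider a stream of $n$ items with frequency vector $(f_x)_x$ of non-negative integers summing to $n$. Partition time into dyadic intervals: for each level $l \ge 0$, the stream's windows are grouped into disjoint intervals $I$ each consisting of $2^l$ consecutive windows, and let $f_{x,I}$ be the frequency of $x$ within interval $I$. Define $\alpha_I$ to be the number of elements $x$ with $f_{x,I} \ge 2^{l-1}$ (for $I$ in level $l$). If $\sum_x f_x^2 \le (1+2^{-8}) C^2 n$, then $\sum_{l \ge 0} \sum_{I \text{ in level } l} \alpha_I \cdot 4^l \le (8 + 2^{-5}) C^2 n$. -/

import Mathlib

open Finset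


private def lmaxF (S : Finset (ℕ × ℕ)) (T : ℕ) (p : ℕ × ℕ) : ℕ :=
  Nat.findGreatest (fun l' => (l', p.2 / 2 ^ (l' - p.1)) ∈ S) T

private def topF (S : Finset (ℕ × ℕ)) (T : ℕ) (p : ℕ × ℕ) : ℕ × ℕ :=
  (lmaxF S T p, p.2 / 2 ^ (lmaxF S T p - p.1))

private lemma lmaxF_base {S : Finset (ℕ × ℕ)} {p : ℕ × ℕ} (hp : p ∈ S) :
    (p.1, p.2 / 2 ^ (p.1 - p.1)) ∈ S := by
  simpa using hp

private lemma lmaxF_le {S : Finset (ℕ × ℕ)} {T : ℕ} {p : ℕ × ℕ} (hp : p ∈ S)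
    (hpT : p.1 ≤ T) : p.1 ≤ lmaxF S T p :=
  Nat.le_findGreatest hpT (lmaxF_base hp)

private lemma topF_mem {S : Finset (ℕ × ℕ)} {T : ℕ} {p : ℕ × ℕ} (hp : p ∈ S)
    (hpT : p.1 ≤ T) : topF S T p ∈ S := by
  have := Nat.findGreatest_spec (P := fun l' => (l', p.2 / 2 ^ (l' - p.1)) ∈ S) hpT (lmaxF_base hp)
  exact this

private lemma topF_max {S : Finset (ℕ × ℕ)} {T : ℕ} {p : ℕ × ℕ} (hp : p ∈ S)
    (hpT : p.1 ≤ T) {l'' : ℕ} (h1 : (topF S T p).1 < l'') (h2 : l'' ≤ T) :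
    (l'', (topF S T p).2 / 2 ^ (l'' - (topF S T p).1)) ∉ S := by
  have hle := lmaxF_le hp hpT
  have h1' : lmaxF S T p < l'' := h1
  have hcomp : (topF S T p).2 / 2 ^ (l'' - (topF S T p).1) = p.2 / 2 ^ (l'' - p.1) := by
    show p.2 / 2 ^ (lmaxF S T p - p.1) / 2 ^ (l'' - lmaxF S T p) = _
    rw [Nat.div_div_eq_div_mul, ← pow_add]
    congr 2
    omega
  rw [hcomp]
  exact Nat.findGreatest_is_greatest h1 h2

private nonrec lemma lt_div_succ_mul (m d : ℕ) (hd : 0 < d) : m < (m / d + 1) * d := by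
  conv_lhs => rw [← Nat.div_add_mod m d]
  rw [add_mul, one_mul]
  exact Nat.add_lt_add_left (Nat.mod_lt m hd) _ |>.trans_eq (by rw [mul_comm])

private lemma div_pow_mem_Ico {m d q : ℕ} (hd : 0 < d) (h : m / d = q) :
    m ∈ Ico (q * d) ((q + 1) * d) := by
  subst h
  exact mem_Ico.mpr ⟨Nat.div_mul_le_self _ _, lt_div_succ_mul m d hd⟩

private lemma dyadic_nest {l1 l2 m1 m2 k : ℕ} (hl : l1 ≤ l2)
    (h1 : k ∈ Ico (m1 * 2 ^ l1) ((m1 + 1) * 2 ^ l1))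
    (h2 : k ∈ Ico (m2 * 2 ^ l2) ((m2 + 1) * 2 ^ l2)) :
    m1 / 2 ^ (l2 - l1) = m2 := by
  rw [mem_Ico] at h1 h2
  have e1 : k / 2 ^ l1 = m1 := Nat.div_eq_of_lt_le h1.1 h1.2
  have e2 : k / 2 ^ l2 = m2 := Nat.div_eq_of_lt_le h2.1 h2.2
  rw [← e1, ← e2, Nat.div_div_eq_div_mul, ← pow_add, Nat.add_sub_cancel' hl]

private lemma geom_bound : ∀ L : ℕ, ∑ l ∈ range (L + 1), 2 ^ (L - l) * 4 ^ l ≤ 2 * 4 ^ L := by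
  intro L
  induction L with
  | zero => simp
  | succ L ih =>
    rw [sum_range_succ]
    have heq : ∑ l ∈ range (L + 1), 2 ^ (L + 1 - l) * 4 ^ l
        = 2 * ∑ l ∈ range (L + 1), 2 ^ (L - l) * 4 ^ l := by
      rw [mul_sum]
      refine sum_congr rfl fun l hl => ?_
      have hlL : l ≤ L := Nat.lt_succ_iff.mp (mem_range.mp hl)
      rw [← mul_assoc, ← pow_succ']
      congr 2
      omega
    rw [heq]
    calc 2 * (∑ l ∈ range (L + 1), 2 ^ (L - l) * 4 ^ l) + 2 ^ (L + 1 - (L + 1)) * 4 ^ (L + 1)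
        ≤ 2 * (2 * 4 ^ L) + 1 * 4 ^ (L + 1) := by
          refine Nat.add_le_add (Nat.mul_le_mul_left _ ih) ?_
          simp
      _ = 2 * 4 ^ (L + 1) := by ring

private lemma sum_sq_le_sq_sum {β : Type*} (s : Finset β) (a : β → ℕ) :
    ∑ i ∈ s, a i ^ 2 ≤ (∑ i ∈ s, a i) ^ 2 := by
  calc ∑ i ∈ s, a i ^ 2 ≤ ∑ i ∈ s, a i * (∑ j ∈ s, a j) := by
        refine sum_le_sum fun i hi => ?_
        rw [pow_two]
        exact Nat.mul_le_mul_left _ (single_le_sum (fun j _ => Nat.zero_le _) hi)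
    _ = (∑ i ∈ s, a i) ^ 2 := by rw [← sum_mul, pow_two]

private lemma key_nat (T : ℕ) (h : ℕ → ℕ) :
    ∑ l ∈ range (T + 1), ∑ m ∈ range (T + 1),
      (if 2 ^ (l - 1) ≤ ∑ w ∈ Ico (m * 2 ^ l) ((m + 1) * 2 ^ l) ∩ range T, h w
        then 4 ^ l else 0)
    ≤ 8 * (∑ w ∈ range T, h w) ^ 2 := by
  classical
  set fI : ℕ × ℕ → ℕ :=
    fun p => ∑ w ∈ Ico (p.2 * 2 ^ p.1) ((p.2 + 1) * 2 ^ p.1) ∩ range T, h w with hfI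
  set S : Finset (ℕ × ℕ) :=
    (range (T + 1) ×ˢ range (T + 1)).filter (fun p => 2 ^ (p.1 - 1) ≤ fI p) with hS
  -- basic membership facts
  have hSmem : ∀ p : ℕ × ℕ, p ∈ S → p.1 ≤ T ∧ p.2 ≤ T ∧ 2 ^ (p.1 - 1) ≤ fI p := by
    intro p hp
    rw [hS, mem_filter, mem_product, mem_range, mem_range] at hp
    exact ⟨by omega, by omega, hp.2⟩
  -- Step A : rewrite LHS as a sum over S
  have hA : ∑ l ∈ range (T + 1), ∑ m ∈ range (T + 1),
      (if 2 ^ (l - 1) ≤ ∑ w ∈ Ico (m * 2 ^ l) ((m + 1) * 2 ^ l) ∩ range T, h w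
        then 4 ^ l else 0) = ∑ p ∈ S, 4 ^ p.1 := by
    rw [hS, sum_filter, sum_product]
  rw [hA]
  set M : Finset (ℕ × ℕ) := S.image (topF S T) with hM
  -- maximality property of elements of M
  have hMprop : ∀ q ∈ M, q ∈ S ∧
      ∀ l'', q.1 < l'' → l'' ≤ T → (l'', q.2 / 2 ^ (l'' - q.1)) ∉ S := by
    intro q hq
    rw [hM, mem_image] at hq
    obtain ⟨p, hp, rfl⟩ := hq
    exact ⟨topF_mem hp (hSmem p hp).1, fun l'' h1 h2 => topF_max hp (hSmem p hp).1 h1 h2⟩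
  -- Step B : fiberwise decomposition
  have hmaps : ∀ p ∈ S, topF S T p ∈ M := fun p hp => mem_image_of_mem _ hp
  rw [← sum_fiberwise_of_maps_to hmaps (fun p => 4 ^ p.1)]
  -- Step C : bound each fiber
  have hfiber : ∀ q ∈ M, (∑ p ∈ S.filter (fun p => topF S T p = q), 4 ^ p.1) ≤ 2 * 4 ^ q.1 := by
    intro q hq
    have hprop : ∀ p ∈ S.filter (fun p => topF S T p = q),
        p.1 ≤ q.1 ∧ p.2 / 2 ^ (q.1 - p.1) = q.2 := by
      intro p hp
      rw [mem_filter] at hp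
      obtain ⟨hpS, htop⟩ := hp
      have h1 := lmaxF_le hpS (hSmem p hpS).1
      have hq1 : q.1 = lmaxF S T p := by rw [← htop]; rfl
      have hq2 : q.2 = p.2 / 2 ^ (lmaxF S T p - p.1) := by rw [← htop]; rfl
      refine ⟨by omega, by rw [hq1, hq2]⟩
    have hmaps2 : ∀ p ∈ S.filter (fun p => topF S T p = q), p.1 ∈ range (q.1 + 1) :=
      fun p hp => mem_range.mpr (Nat.lt_succ_of_le (hprop p hp).1)
    calc (∑ p ∈ S.filter (fun p => topF S T p = q), 4 ^ p.1)
        = ∑ l ∈ range (q.1 + 1),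
            ∑ p ∈ (S.filter (fun p => topF S T p = q)).filter (fun p => p.1 = l), 4 ^ p.1 :=
          (sum_fiberwise_of_maps_to hmaps2 (fun p => 4 ^ p.1)).symm
      _ ≤ ∑ l ∈ range (q.1 + 1), 2 ^ (q.1 - l) * 4 ^ l := by
          refine sum_le_sum fun l _ => ?_
          have hcongr : ∑ p ∈ (S.filter (fun p => topF S T p = q)).filter (fun p => p.1 = l),
              4 ^ p.1 = ∑ p ∈ (S.filter (fun p => topF S T p = q)).filter (fun p => p.1 = l),
              4 ^ l := by
            refine sum_congr rfl fun p hp => ?_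
            rw [(mem_filter.mp hp).2]
          rw [hcongr, sum_const, smul_eq_mul]
          have hcard : ((S.filter (fun p => topF S T p = q)).filter (fun p => p.1 = l)).card
              ≤ 2 ^ (q.1 - l) := by
            have : ((S.filter (fun p => topF S T p = q)).filter (fun p => p.1 = l)).card
                ≤ (Ico (q.2 * 2 ^ (q.1 - l)) ((q.2 + 1) * 2 ^ (q.1 - l))).card := by
              refine card_le_card_of_injOn (fun p => p.2) ?_ ?_
              · intro p hp
                rw [Finset.mem_coe, mem_filter] at hp
                have h2 := (hprop p hp.1).2
                rw [hp.2] at h2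
                exact div_pow_mem_Ico (Nat.pow_pos (by norm_num)) h2
              · intro p hp p' hp' hpp
                simp only [Finset.coe_filter, Set.mem_setOf_eq] at hp hp'
                exact Prod.ext (hp.2.trans hp'.2.symm) hpp
            rwa [Nat.card_Ico, add_mul, one_mul, Nat.add_sub_cancel_left] at this
          exact Nat.mul_le_mul_right _ hcard
      _ ≤ 2 * 4 ^ q.1 := geom_bound q.1
  -- Step D : 2 * 4 ^ q.1 ≤ 8 * fI q ^ 2 for q ∈ M
  have hDq : ∀ q ∈ M, 2 * 4 ^ q.1 ≤ 8 * fI q ^ 2 := by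
    intro q hq
    have hqS := (hMprop q hq).1
    have hheavy := (hSmem q hqS).2.2
    rcases Nat.eq_zero_or_pos q.1 with h0 | hpos
    · rw [h0] at hheavy ⊢
      simp only [pow_zero, mul_one] at *
      have : 1 ≤ fI q := by simpa using hheavy
      nlinarith
    · obtain ⟨L, hL⟩ : ∃ L, q.1 = L + 1 := ⟨q.1 - 1, by omega⟩
      rw [hL] at hheavy ⊢
      have h1 : 2 ^ L ≤ fI q := by simpa using hheavy
      have h2 : (2 ^ L) ^ 2 ≤ fI q ^ 2 := Nat.pow_le_pow_left h1 2
      have h3 : (2 ^ L) ^ 2 = 4 ^ L := by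
        rw [← pow_mul, show (4 : ℕ) = 2 ^ 2 from rfl, ← pow_mul]
        ring_nf
      calc 2 * 4 ^ (L + 1) = 8 * 4 ^ L := by ring
        _ = 8 * (2 ^ L) ^ 2 := by rw [h3]
        _ ≤ 8 * fI q ^ 2 := Nat.mul_le_mul_left _ h2
  -- Step E : disjointness and the final bound
  have hdisj : (M : Set (ℕ × ℕ)).PairwiseDisjoint
      (fun q : ℕ × ℕ => Ico (q.2 * 2 ^ q.1) ((q.2 + 1) * 2 ^ q.1) ∩ range T) := by
    have aux : ∀ q1 ∈ M, ∀ q2 ∈ M, q1.1 ≤ q2.1 → q1 ≠ q2 →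
        Disjoint (Ico (q1.2 * 2 ^ q1.1) ((q1.2 + 1) * 2 ^ q1.1) ∩ range T)
          (Ico (q2.2 * 2 ^ q2.1) ((q2.2 + 1) * 2 ^ q2.1) ∩ range T) := by
      intro q1 hq1 q2 hq2 hle hne
      by_contra hcon
      obtain ⟨k, hk1, hk2⟩ := Finset.not_disjoint_iff.mp hcon
      have hk1' := (mem_inter.mp hk1).1
      have hk2' := (mem_inter.mp hk2).1
      have hdiv := dyadic_nest hle hk1' hk2'
      rcases eq_or_lt_of_le hle with heq | hlt
      · apply hne
        rw [heq, Nat.sub_self, pow_zero, Nat.div_one] at hdiv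
        exact Prod.ext heq hdiv
      · have hq2T := (hSmem q2 (hMprop q2 hq2).1).1
        exact (hMprop q1 hq1).2 q2.1 hlt hq2T (by rw [hdiv]; exact (hMprop q2 hq2).1)
    intro q1 hq1 q2 hq2 hne
    rcases le_total q1.1 q2.1 with hle | hle
    · exact aux q1 hq1 q2 hq2 hle hne
    · exact (aux q2 hq2 q1 hq1 hle hne.symm).symm
  have hsum_le : (∑ q ∈ M, fI q) ≤ ∑ w ∈ range T, h w := by
    have : (∑ q ∈ M, fI q) = ∑ w ∈ M.biUnion
        (fun q : ℕ × ℕ => Ico (q.2 * 2 ^ q.1) ((q.2 + 1) * 2 ^ q.1) ∩ range T), h w :=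
      (sum_biUnion hdisj).symm
    rw [this]
    refine sum_le_sum_of_subset ?_
    intro w hw
    obtain ⟨q, _, hwq⟩ := mem_biUnion.mp hw
    exact (mem_inter.mp hwq).2
  calc (∑ q ∈ M, ∑ p ∈ S.filter (fun p => topF S T p = q), 4 ^ p.1)
      ≤ ∑ q ∈ M, 2 * 4 ^ q.1 := sum_le_sum hfiber
    _ ≤ ∑ q ∈ M, 8 * fI q ^ 2 := sum_le_sum hDq
    _ = 8 * ∑ q ∈ M, fI q ^ 2 := by rw [mul_sum]
    _ ≤ 8 * (∑ q ∈ M, fI q) ^ 2 := Nat.mul_le_mul_left _ (sum_sq_le_sq_sum M fI)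
    _ ≤ 8 * (∑ w ∈ range T, h w) ^ 2 := Nat.mul_le_mul_left _ (Nat.pow_le_pow_left hsum_le 2)

/-- Claim 5.2 of the paper: the number of "locally heavy" elements in the dyadic
hierarchy of intervals, weighted by `4^l`, is bounded via the second moment.
Here `T` is the number of windows, `g x w` is the number of occurrences of element
`x` in window `w`, and the level-`l` interval indexed by `m` consists of windows
`m·2^l, …, (m+1)·2^l - 1`. The count `α_I` of elements with frequency at least
`2^(l-1)` in the interval appears as the cardinality of a filter. -/
theorem dyadic_heavy_count_bound {α : Type*} [Fintype α] [DecidableEq α]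
    (n T : ℕ) (C : ℝ) (g : α → ℕ → ℕ) (f : α → ℕ)
    (hf : ∀ x, f x = ∑ w ∈ Finset.range T, g x w)
    (hn : ∑ x, f x = n)
    (h2 : (∑ x, (f x : ℝ) ^ 2) ≤ (1 + (2:ℝ) ^ (-8 : ℤ)) * C ^ 2 * n) :
    ∑ l ∈ Finset.range (T + 1), ∑ m ∈ Finset.range (T + 1),
        ((Finset.univ.filter (fun x =>
            2 ^ (l - 1) ≤ ∑ w ∈ Finset.Ico (m * 2 ^ l) ((m + 1) * 2 ^ l) ∩ Finset.range T,
              g x w)).card : ℝ) * 4 ^ l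
      ≤ (8 + (2:ℝ) ^ (-5 : ℤ)) * C ^ 2 * n := by
  classical
  have hcard : ∀ l m : ℕ,
      ((Finset.univ.filter (fun x =>
          2 ^ (l - 1) ≤ ∑ w ∈ Finset.Ico (m * 2 ^ l) ((m + 1) * 2 ^ l) ∩ Finset.range T,
            g x w)).card : ℝ) * 4 ^ l
      = ∑ x : α, (if 2 ^ (l - 1) ≤ ∑ w ∈ Ico (m * 2 ^ l) ((m + 1) * 2 ^ l) ∩ range T, g x w
          then (4:ℝ) ^ l else 0) := by
    intro l m
    rw [card_filter, Nat.cast_sum, sum_mul]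
    refine sum_congr rfl fun x _ => ?_
    split <;> simp
  have hx : ∀ x : α, (∑ l ∈ range (T + 1), ∑ m ∈ range (T + 1),
      (if 2 ^ (l - 1) ≤ ∑ w ∈ Ico (m * 2 ^ l) ((m + 1) * 2 ^ l) ∩ range T, g x w
        then (4:ℝ) ^ l else 0)) ≤ 8 * (f x : ℝ) ^ 2 := by
    intro x
    have h0 := key_nat T (g x)
    rw [← hf x] at h0
    have h1 := (Nat.cast_le (α := ℝ)).mpr h0
    push_cast at h1
    exact h1
  calc ∑ l ∈ Finset.range (T + 1), ∑ m ∈ Finset.range (T + 1),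
        ((Finset.univ.filter (fun x =>
            2 ^ (l - 1) ≤ ∑ w ∈ Finset.Ico (m * 2 ^ l) ((m + 1) * 2 ^ l) ∩ Finset.range T,
              g x w)).card : ℝ) * 4 ^ l
      = ∑ l ∈ range (T + 1), ∑ m ∈ range (T + 1), ∑ x : α,
          (if 2 ^ (l - 1) ≤ ∑ w ∈ Ico (m * 2 ^ l) ((m + 1) * 2 ^ l) ∩ range T, g x w
            then (4:ℝ) ^ l else 0) := by
        exact sum_congr rfl fun l _ => sum_congr rfl fun m _ => hcard l m
    _ = ∑ l ∈ range (T + 1), ∑ x : α, ∑ m ∈ range (T + 1),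
          (if 2 ^ (l - 1) ≤ ∑ w ∈ Ico (m * 2 ^ l) ((m + 1) * 2 ^ l) ∩ range T, g x w
            then (4:ℝ) ^ l else 0) := sum_congr rfl fun l _ => sum_comm
    _ = ∑ x : α, ∑ l ∈ range (T + 1), ∑ m ∈ range (T + 1),
          (if 2 ^ (l - 1) ≤ ∑ w ∈ Ico (m * 2 ^ l) ((m + 1) * 2 ^ l) ∩ range T, g x w
            then (4:ℝ) ^ l else 0) := sum_comm
    _ ≤ ∑ x : α, 8 * (f x : ℝ) ^ 2 := sum_le_sum fun x _ => hx x
    _ = 8 * ∑ x : α, (f x : ℝ) ^ 2 := by rw [mul_sum]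
    _ ≤ 8 * ((1 + (2:ℝ) ^ (-8 : ℤ)) * C ^ 2 * n) := by linarith
    _ = (8 + (2:ℝ) ^ (-5 : ℤ)) * C ^ 2 * n := by norm_num; ring
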